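/- Let f(h) = ‖y - Ah‖² + λ∑_n tanh(|h_n|²/ε), and let Q(h | h̃) = ‖y - Ah‖² + λ∑_n tanh(|h̃_n|²/ε) + (λ/ε)∑_n (1 - tanh²(|h̃_n|²/ε))(|h_n|² - |h̃_n|²). Then Q(h | h̃) ≥ f(h) for all h, with equality at h = h̃. Consequently, if h⁺ minimizes Q(· | h̃), then f(h⁺) ≤ f(h̃), i.e., the MM iteration monotonically decreases the objective. -/

import Mathlib

lemma hasDerivAt_tanh' (x : ℝ) :
    HasDerivAt Real.tanh (1 - Real.tanh x ^ 2) x := by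
  have h := (Real.hasDerivAt_sinh x).div (Real.hasDerivAt_cosh x)
    (Real.cosh_pos x).ne'
  have hfun : (Real.sinh / Real.cosh) = Real.tanh := by
    funext y; rw [Pi.div_apply, Real.tanh_eq_sinh_div_cosh]
  rw [hfun] at h
  refine h.congr_deriv ?_
  have hc := (Real.cosh_pos x).ne'
  rw [Real.tanh_eq_sinh_div_cosh]
  field_simp

lemma tanh_strictMono : StrictMono Real.tanh := by
  apply strictMono_of_deriv_pos
  intro x
  rw [(hasDerivAt_tanh' x).deriv]
  have h1 : Real.tanh x ^ 2 < 1 := by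
    have := Real.cosh_sq_sub_sinh_sq x
    have hc := Real.cosh_pos x
    rw [Real.tanh_eq_sinh_div_cosh]
    rw [div_pow, div_lt_one (by positivity)]
    nlinarith
  linarith

lemma tanh_nonneg' {x : ℝ} (hx : 0 ≤ x) : 0 ≤ Real.tanh x := by
  have := tanh_strictMono.monotone hx
  simpa [Real.tanh_zero] using this

/-- Concavity-type tangent-line bound for tanh on `[0, ∞)`. -/
lemma tanh_tangent_le {a b : ℝ} (ha : 0 ≤ a) (hb : 0 ≤ b) :
    Real.tanh b ≤ Real.tanh a + (1 - Real.tanh a ^ 2) * (b - a) := by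
  have hcont : Continuous Real.tanh :=
    continuous_iff_continuousAt.2 fun x => (hasDerivAt_tanh' x).continuousAt
  rcases lt_trichotomy a b with hab | hab | hab
  · obtain ⟨c, hc, hderiv⟩ := exists_hasDerivAt_eq_slope Real.tanh
      (fun x => 1 - Real.tanh x ^ 2) hab
      hcont.continuousOn
      (fun x _ => hasDerivAt_tanh' x)
    have hca : a ≤ c := le_of_lt hc.1
    have h1 : Real.tanh a ≤ Real.tanh c := tanh_strictMono.monotone hca
    have h2 : 0 ≤ Real.tanh a := tanh_nonneg' ha
    have h3 : Real.tanh c ^ 2 ≥ Real.tanh a ^ 2 := by nlinarith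
    have hba : 0 < b - a := by linarith
    have : Real.tanh b - Real.tanh a = (1 - Real.tanh c ^ 2) * (b - a) := by
      field_simp at hderiv
      linarith [hderiv]
    nlinarith
  · simp [hab]
  · obtain ⟨c, hc, hderiv⟩ := exists_hasDerivAt_eq_slope Real.tanh
      (fun x => 1 - Real.tanh x ^ 2) hab
      hcont.continuousOn
      (fun x _ => hasDerivAt_tanh' x)
    have hca : c ≤ a := le_of_lt hc.2
    have hcb : 0 ≤ c := le_trans hb (le_of_lt hc.1)
    have h1 : Real.tanh c ≤ Real.tanh a := tanh_strictMono.monotone hca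
    have h2 : 0 ≤ Real.tanh c := tanh_nonneg' hcb
    have h3 : Real.tanh c ^ 2 ≤ Real.tanh a ^ 2 := by nlinarith
    have hba : 0 < a - b := by linarith
    have : Real.tanh a - Real.tanh b = (1 - Real.tanh c ^ 2) * (a - b) := by
      field_simp at hderiv
      linarith [hderiv]
    nlinarith

/-- MM majorization and descent: the surrogate
`Q(h | h̃) = ‖y - Ah‖² + λ∑ tanh(|h̃_n|²/ε) + (λ/ε)∑(1 - tanh²(|h̃_n|²/ε))(|h_n|² - |h̃_n|²)`
majorizes `f(h) = ‖y - Ah‖² + λ∑ tanh(|h_n|²/ε)` with equality at `h = h̃`;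
consequently any minimizer of `Q(· | h̃)` does not increase `f`. -/
theorem mm_majorization_descent (M N : ℕ)
    (A : Matrix (Fin M) (Fin N) ℂ) (y : Fin M → ℂ)
    (lam ε : ℝ) (hlam : 0 < lam) (hε : 0 < ε) :
    let f : (Fin N → ℂ) → ℝ := fun h =>
      (∑ m, ‖y m - A.mulVec h m‖ ^ 2)
        + lam * ∑ n, Real.tanh (‖h n‖ ^ 2 / ε)
    let Q : (Fin N → ℂ) → (Fin N → ℂ) → ℝ := fun h ht =>
      (∑ m, ‖y m - A.mulVec h m‖ ^ 2)
        + lam * ∑ n, Real.tanh (‖ht n‖ ^ 2 / ε)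
        + (lam / ε) * ∑ n, (1 - Real.tanh (‖ht n‖ ^ 2 / ε) ^ 2)
            * (‖h n‖ ^ 2 - ‖ht n‖ ^ 2)
    (∀ h ht : Fin N → ℂ, f h ≤ Q h ht) ∧
    (∀ ht : Fin N → ℂ, Q ht ht = f ht) ∧
    (∀ ht hplus : Fin N → ℂ, (∀ h', Q hplus ht ≤ Q h' ht) → f hplus ≤ f ht) := by
  intro f Q
  have hmaj : ∀ h ht : Fin N → ℂ, f h ≤ Q h ht := by
    intro h ht
    simp only [f, Q]
    have key : ∀ n : Fin N,
        Real.tanh (‖h n‖ ^ 2 / ε)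
          ≤ Real.tanh (‖ht n‖ ^ 2 / ε)
            + (1 / ε) * ((1 - Real.tanh (‖ht n‖ ^ 2 / ε) ^ 2)
                * (‖h n‖ ^ 2 - ‖ht n‖ ^ 2)) := by
      intro n
      have := tanh_tangent_le
        (a := ‖ht n‖ ^ 2 / ε) (b := ‖h n‖ ^ 2 / ε)
        (by positivity) (by positivity)
      have heq : ‖h n‖ ^ 2 / ε - ‖ht n‖ ^ 2 / ε
          = (1 / ε) * (‖h n‖ ^ 2 - ‖ht n‖ ^ 2) := by
        field_simp
      rw [heq] at this
      linarith [this]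
    have hsum : ∑ n, Real.tanh (‖h n‖ ^ 2 / ε)
        ≤ ∑ n, (Real.tanh (‖ht n‖ ^ 2 / ε)
            + (1 / ε) * ((1 - Real.tanh (‖ht n‖ ^ 2 / ε) ^ 2)
                * (‖h n‖ ^ 2 - ‖ht n‖ ^ 2))) :=
      Finset.sum_le_sum (fun n _ => key n)
    rw [Finset.sum_add_distrib, ← Finset.mul_sum] at hsum
    have hlam' : lam * ∑ n, Real.tanh (‖h n‖ ^ 2 / ε)
        ≤ lam * (∑ n, Real.tanh (‖ht n‖ ^ 2 / ε)
          + (1 / ε) * ∑ n, (1 - Real.tanh (‖ht n‖ ^ 2 / ε) ^ 2)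
              * (‖h n‖ ^ 2 - ‖ht n‖ ^ 2)) :=
      mul_le_mul_of_nonneg_left hsum hlam.le
    have hdiv : lam / ε = lam * (1 / ε) := by ring
    rw [hdiv]
    nlinarith [hlam']
  refine ⟨hmaj, ?_, ?_⟩
  · intro ht
    simp only [f, Q, sub_self, mul_zero, Finset.sum_const_zero]
    ring
  · intro ht hplus hmin
    calc f hplus ≤ Q hplus ht := hmaj hplus ht
      _ ≤ Q ht ht := hmin ht
      _ = f ht := by
          simp only [f, Q, sub_self, mul_zero, Finset.sum_const_zero]
          ring
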